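/- Let $(R,\mathfrak{m})$ be a regular local ring and let $f_1, f_2 \in \mathfrak{m}$ be coprime elements (i.e., they have no common irreducible factor). Then the local hypersurface ring $R[t]_{(t)}/(t^2 - f_1 f_2)$ is not a unique factorization domain. -/

import Mathlib

open Polynomial IsLocalRing

section AuxLemmas
variable {R : Type*} [CommRing R]

lemma aux_degree_le_one {q : Polynomial R} (h : q.degree < 2) : q.degree ≤ 1 := by
  rcases hd : q.degree with _ | n
  · exact bot_le
  · rw [hd] at h
    have h' : (n : WithBot ℕ) < 2 := h
    have hn : n < 2 := by exact_mod_cast h'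
    have h2 : n ≤ 1 := by omega
    have : (n : WithBot ℕ) ≤ 1 := by exact_mod_cast h2
    exact this

lemma aux_dvd_eq_zero [Nontrivial R] (g : R) (p : Polynomial R)
    (hdeg : p.degree ≤ 1) (hdvd : X ^ 2 - C g ∣ p) : p = 0 := by
  obtain ⟨h, rfl⟩ := hdvd
  by_contra hne
  have hh : h ≠ 0 := by rintro rfl; simp at hne
  have hmul : ((X ^ 2 - C g) * h).degree = (X ^ 2 - C g).degree + h.degree := by
    rw [mul_comm, (monic_X_pow_sub_C g two_ne_zero).degree_mul, add_comm]
  rw [degree_X_pow_sub_C (by norm_num) g] at hmul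
  have h0 : (0 : WithBot ℕ) ≤ h.degree := zero_le_degree_iff.mpr hh
  have : (2 : WithBot ℕ) ≤ ((X ^ 2 - C g) * h).degree := by
    rw [hmul]
    calc (2 : WithBot ℕ) = 2 + 0 := by simp
    _ ≤ 2 + h.degree := by exact add_le_add_right h0 2
  have hcon : (2 : WithBot ℕ) ≤ 1 := this.trans hdeg
  norm_num at hcon

lemma aux_coeff_eq_zero [Nontrivial R] (g a b : R)
    (h : Ideal.Quotient.mk (Ideal.span {X ^ 2 - C g}) (C a + C b * X) = 0) :
    a = 0 ∧ b = 0 := by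
  rw [Ideal.Quotient.eq_zero_iff_mem, Ideal.mem_span_singleton] at h
  have hz := aux_dvd_eq_zero g _ (by
    have := degree_linear_le (a := b) (b := a)
    rwa [add_comm] at this) h
  constructor
  · have := congrArg (fun p => coeff p 0) hz; simpa using this
  · have := congrArg (fun p => coeff p 1) hz; simpa using this

lemma aux_rep [Nontrivial R] (g : R) (z : Polynomial R ⧸ Ideal.span {X ^ 2 - C g}) :
    ∃ a b : R, z = Ideal.Quotient.mk _ (C a + C b * X) := by
  obtain ⟨p, rfl⟩ := Ideal.Quotient.mk_surjective z
  set f : Polynomial R := X ^ 2 - C g with hf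
  have hm : f.Monic := monic_X_pow_sub_C g two_ne_zero
  refine ⟨(p %ₘ f).coeff 0, (p %ₘ f).coeff 1, ?_⟩
  have h1 : Ideal.Quotient.mk (Ideal.span {f}) p = Ideal.Quotient.mk _ (p %ₘ f) := by
    rw [Ideal.Quotient.eq, Ideal.mem_span_singleton]
    refine ⟨p /ₘ f, ?_⟩
    have := modByMonic_add_div p f
    linear_combination -this
  rw [h1]
  congr 1
  have hdeg : (p %ₘ f).degree ≤ 1 := by
    have := degree_modByMonic_lt p hm
    rw [degree_X_pow_sub_C (by norm_num) g] at this
    exact aux_degree_le_one this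
  have h2 := eq_X_add_C_of_degree_le_one hdeg
  rw [add_comm] at h2
  exact h2

end AuxLemmas

section Units
variable {R : Type*} [CommRing R] [IsLocalRing R]

noncomputable def auxChi (g : R) (hg : g ∈ maximalIdeal R) :
    (Polynomial R ⧸ Ideal.span {X ^ 2 - C g}) →+* R ⧸ maximalIdeal R :=
  Ideal.Quotient.lift _ (eval₂RingHom (Ideal.Quotient.mk (maximalIdeal R)) 0) (by
    intro p hp
    rw [Ideal.mem_span_singleton] at hp
    obtain ⟨c, rfl⟩ := hp
    have hg0 : Ideal.Quotient.mk (maximalIdeal R) g = 0 :=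
      Ideal.Quotient.eq_zero_iff_mem.mpr hg
    simp [hg0])

lemma auxChi_mk (g : R) (hg : g ∈ maximalIdeal R) (p : Polynomial R) :
    auxChi g hg (Ideal.Quotient.mk _ p) = Ideal.Quotient.mk (maximalIdeal R) (p.coeff 0) := by
  unfold auxChi
  rw [Ideal.Quotient.lift_mk]
  simp

lemma aux_mk_C_sq (g a b : R) :
    (Ideal.Quotient.mk (Ideal.span {X ^ 2 - C g}) (C a + C b * X)) *
      (Ideal.Quotient.mk _ (C a - C b * X)) = Ideal.Quotient.mk _ (C (a ^ 2 - b ^ 2 * g)) := by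
  rw [← map_mul, Ideal.Quotient.eq, Ideal.mem_span_singleton]
  refine ⟨-C (b ^ 2), ?_⟩
  simp only [C_sub, C_mul, C_pow]
  ring

lemma aux_unit_of_coeff (g : R) (hg : g ∈ maximalIdeal R) (p : Polynomial R)
    (hp : p.coeff 0 ∉ maximalIdeal R) :
    IsUnit (Ideal.Quotient.mk (Ideal.span {X ^ 2 - C g}) p) := by
  obtain ⟨a, b, hab⟩ := aux_rep g (Ideal.Quotient.mk _ p)
  have hchi : Ideal.Quotient.mk (maximalIdeal R) (p.coeff 0) =
      Ideal.Quotient.mk (maximalIdeal R) a := by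
    have := congrArg (auxChi g hg) hab
    rw [auxChi_mk, auxChi_mk] at this
    simpa using this
  have ha : a ∉ maximalIdeal R := by
    intro h
    apply hp
    have hsub : p.coeff 0 - a ∈ maximalIdeal R := Ideal.Quotient.eq.mp hchi
    have := add_mem hsub h
    simpa using this
  have hmax : (maximalIdeal R).IsPrime := (IsLocalRing.maximalIdeal.isMaximal R).isPrime
  have hu : a ^ 2 - b ^ 2 * g ∉ maximalIdeal R := by
    intro h
    apply ha
    have h2 : a ^ 2 ∈ maximalIdeal R := by
      have := add_mem h (Ideal.mul_mem_left _ (b ^ 2) hg)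
      simpa using this
    exact hmax.mem_of_pow_mem 2 h2
  have huu : IsUnit (a ^ 2 - b ^ 2 * g) := IsLocalRing.notMem_maximalIdeal.mp hu
  rw [hab]
  apply isUnit_of_mul_isUnit_left (y := Ideal.Quotient.mk _ (C a - C b * X))
  rw [aux_mk_C_sq]
  exact huu.map ((Ideal.Quotient.mk (Ideal.span {X ^ 2 - C g})).comp C)

lemma aux_not_unit_of_coeff (g : R) (hg : g ∈ maximalIdeal R) (p : Polynomial R)
    (hp : p.coeff 0 ∈ maximalIdeal R) :
    ¬ IsUnit (Ideal.Quotient.mk (Ideal.span {X ^ 2 - C g}) p) := by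
  intro h
  have hz := h.map (auxChi g hg)
  rw [auxChi_mk, Ideal.Quotient.eq_zero_iff_mem.mpr hp] at hz
  haveI : Nontrivial (R ⧸ maximalIdeal R) :=
    Ideal.Quotient.nontrivial_iff.mpr (IsLocalRing.maximalIdeal.isMaximal R).ne_top
  exact not_isUnit_zero hz

end Units

section Core

section Core
variable {R : Type*} [CommRing R] [IsLocalRing R]

set_option maxHeartbeats 1600000 in
theorem aux_not_ufd (f₁ f₂ : R) (hf₁ : f₁ ∈ maximalIdeal R) (hf₂ : f₂ ∈ maximalIdeal R)
    [IsDomain (Polynomial R ⧸ Ideal.span {X ^ 2 - C (f₁ * f₂)})] :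
    ¬ UniqueFactorizationMonoid (Polynomial R ⧸ Ideal.span {X ^ 2 - C (f₁ * f₂)}) := by
  intro hufm
  have hg : f₁ * f₂ ∈ maximalIdeal R := Ideal.mul_mem_right _ _ hf₁
  haveI hRdom : IsDomain R := by
    refine Function.Injective.isDomain
      ((Ideal.Quotient.mk (Ideal.span {X ^ 2 - C (f₁ * f₂)})).comp C) ?_
    intro r s h
    have h1 : Ideal.Quotient.mk (Ideal.span {X ^ 2 - C (f₁ * f₂)}) (C (r - s) + C 0 * X) = 0 := by
      simpa using sub_eq_zero.mpr h
    exact sub_eq_zero.mp (aux_coeff_eq_zero (f₁ * f₂) (r - s) 0 h1).1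
  obtain ⟨θ, hθ⟩ : ∃ θ, θ = Ideal.Quotient.mk (Ideal.span {X ^ 2 - C (f₁ * f₂)}) X := ⟨_, rfl⟩
  have hθ2 : θ ^ 2 = Ideal.Quotient.mk _ (C (f₁ * f₂)) := by
    have h0 : Ideal.Quotient.mk (Ideal.span {X ^ 2 - C (f₁ * f₂)}) (X ^ 2 - C (f₁ * f₂)) = 0 :=
      Ideal.Quotient.eq_zero_iff_mem.mpr (Ideal.mem_span_singleton_self _)
    rw [map_sub, map_pow, sub_eq_zero] at h0
    rw [hθ]
    exact h0
  have hθ0 : θ ≠ 0 := by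
    intro h
    rw [hθ] at h
    have hX : (X : Polynomial R) = 0 := by
      apply aux_dvd_eq_zero (f₁ * f₂) X degree_X_le
      exact Ideal.mem_span_singleton.mp (Ideal.Quotient.eq_zero_iff_mem.mp h)
    exact X_ne_zero hX
  have hirr : Irreducible θ := by
    constructor
    · rw [hθ]
      exact aux_not_unit_of_coeff (f₁ * f₂) hg X (by simpa using (maximalIdeal R).zero_mem)
    · rintro u v huv
      by_contra hc
      push_neg at hc
      obtain ⟨hu, hv⟩ := hc
      obtain ⟨a, b, rfl⟩ := aux_rep (f₁ * f₂) u
      obtain ⟨c, d, rfl⟩ := aux_rep (f₁ * f₂) v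
      have ha : a ∈ maximalIdeal R := by
        by_contra ha
        exact hu (aux_unit_of_coeff (f₁ * f₂) hg _ (by simpa using ha))
      have hcm : c ∈ maximalIdeal R := by
        by_contra hcm
        exact hv (aux_unit_of_coeff (f₁ * f₂) hg _ (by simpa using hcm))
      have hkey : Ideal.Quotient.mk (Ideal.span {X ^ 2 - C (f₁ * f₂)})
          (C (a*c + b*d*(f₁ * f₂) - 0) + C (a*d + b*c - 1) * X) = 0 := by
        have hpoly : C (a*c + b*d*(f₁ * f₂) - 0) + C (a*d + b*c - 1) * X
            = (C a + C b * X) * (C c + C d * X) - X - (X ^ 2 - C (f₁ * f₂)) * C (b*d) := by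
          simp only [C_add, C_sub, C_mul, C_1, C_0]
          ring
        rw [hpoly, map_sub, map_sub,
          map_mul (Ideal.Quotient.mk (Ideal.span {X ^ 2 - C (f₁ * f₂)})) (C a + C b * X)
            (C c + C d * X),
          map_mul (Ideal.Quotient.mk (Ideal.span {X ^ 2 - C (f₁ * f₂)}))
            (X ^ 2 - C (f₁ * f₂)) (C (b * d)),
          show Ideal.Quotient.mk (Ideal.span {X ^ 2 - C (f₁ * f₂)}) (X ^ 2 - C (f₁ * f₂)) = 0 from
            Ideal.Quotient.eq_zero_iff_mem.mpr (Ideal.mem_span_singleton_self _),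
          ← huv, hθ]
        simp
      obtain ⟨h1, h2⟩ := aux_coeff_eq_zero (f₁ * f₂) _ _ hkey
      have h3 : a * d + b * c = 1 := by linear_combination h2
      have hone : (1 : R) ∈ maximalIdeal R := by
        rw [← h3]
        exact add_mem (Ideal.mul_mem_right _ _ ha) (Ideal.mul_mem_left _ _ hcm)
      exact (IsLocalRing.maximalIdeal.isMaximal R).ne_top
        (Ideal.eq_top_of_isUnit_mem _ hone isUnit_one)
  haveI := hufm
  have hprime : Prime θ := UniqueFactorizationMonoid.irreducible_iff_prime.mp hirr
  have hdvd : θ ∣ Ideal.Quotient.mk (Ideal.span {X ^ 2 - C (f₁ * f₂)}) (C f₁) *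
      Ideal.Quotient.mk _ (C f₂) := by
    refine ⟨θ, ?_⟩
    rw [← map_mul, ← C_mul, ← hθ2]
    ring
  have hcase : ∀ x y : R, x * y = f₁ * f₂ → y ∈ maximalIdeal R →
      θ ∣ Ideal.Quotient.mk (Ideal.span {X ^ 2 - C (f₁ * f₂)}) (C x) → False := by
    rintro x y hxy hy ⟨w, hw⟩
    obtain ⟨c, d, hwrep⟩ := aux_rep (f₁ * f₂) w
    rw [hwrep, hθ] at hw
    have hkey : Ideal.Quotient.mk (Ideal.span {X ^ 2 - C (f₁ * f₂)})
        (C (x - d*(f₁ * f₂)) + C (0 - c) * X) = 0 := by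
      have hpoly : C (x - d*(f₁ * f₂)) + C (0 - c) * X
          = C x - X * (C c + C d * X) + (X ^ 2 - C (f₁ * f₂)) * C d := by
        simp only [C_sub, C_mul, C_0]
        ring
      rw [hpoly, map_add, map_sub,
        map_mul (Ideal.Quotient.mk (Ideal.span {X ^ 2 - C (f₁ * f₂)})) X (C c + C d * X),
        ← hw, sub_self, zero_add]
      exact Ideal.Quotient.eq_zero_iff_mem.mpr
        (Ideal.mul_mem_right _ _ (Ideal.mem_span_singleton_self _))
    obtain ⟨h1, h2⟩ := aux_coeff_eq_zero (f₁ * f₂) _ _ hkey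
    have hfac : x * (1 - d * y) = 0 := by
      linear_combination (sub_eq_zero.mp h1) - d * hxy
    rcases mul_eq_zero.mp hfac with hx0 | h1y
    · have hg0 : f₁ * f₂ = 0 := by rw [← hxy, hx0, zero_mul]
      have hC0 : (C (f₁ * f₂) : Polynomial R) = 0 := by rw [hg0, C_0]
      have hsq : θ ^ 2 = 0 :=
        hθ2.trans ((congrArg (Ideal.Quotient.mk _) hC0).trans (map_zero _))
      have hmm : θ * θ = 0 := by rw [← sq]; exact hsq
      rcases mul_eq_zero.mp hmm with h0 | h0 <;> exact hθ0 h0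
    · have hy1 : y * d = 1 := by linear_combination -h1y
      have hyu : IsUnit y := IsUnit.of_mul_eq_one d hy1
      exact IsLocalRing.notMem_maximalIdeal.mpr hyu hy
  rcases hprime.2.2 _ _ hdvd with h | h
  · exact hcase f₁ f₂ rfl hf₂ h
  · exact hcase f₂ f₁ (mul_comm f₂ f₁) hf₁ h

end Core

section MemP
variable {R : Type*} [CommRing R] [IsLocalRing R]

lemma aux_mem_P_iff {P : Ideal (Polynomial R)}
    (hP : P = Ideal.span ({X} ∪ C '' (maximalIdeal R : Set R))) (p : Polynomial R) :
    p ∈ P ↔ p.coeff 0 ∈ maximalIdeal R := by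
  subst hP
  constructor
  · intro hp
    have hle : Ideal.span ({X} ∪ C '' (maximalIdeal R : Set R)) ≤
        Ideal.comap (constantCoeff : Polynomial R →+* R) (maximalIdeal R) := by
      rw [Ideal.span_le]
      rintro q (rfl | ⟨r, hr, rfl⟩)
      · simp [Ideal.mem_comap]
      · simpa [Ideal.mem_comap] using hr
    simpa [Ideal.mem_comap, constantCoeff_apply] using hle hp
  · intro hp
    have h1 : X * p.divX ∈ Ideal.span ({X} ∪ C '' (maximalIdeal R : Set R)) :=
      Ideal.mul_mem_right _ _ (Ideal.subset_span (Or.inl rfl))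
    have h2 : C (p.coeff 0) ∈ Ideal.span ({X} ∪ C '' (maximalIdeal R : Set R)) :=
      Ideal.subset_span (Or.inr ⟨_, hp, rfl⟩)
    have h3 := add_mem h1 h2
    rwa [X_mul_divX_add] at h3

end MemP

section Iso
variable {R : Type*} [CommRing R] (g : R) (P : Ideal (Polynomial R)) [P.IsPrime]

noncomputable def auxAlphaBar
    (hu : ∀ y : P.primeCompl, IsUnit (Ideal.Quotient.mk (Ideal.span {X ^ 2 - C g})
      (y : Polynomial R))) :
    (Localization.AtPrime P ⧸
        Ideal.span {algebraMap (Polynomial R) (Localization.AtPrime P) (X ^ 2 - C g)}) →+*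
      (Polynomial R ⧸ Ideal.span {X ^ 2 - C g}) :=
  Ideal.Quotient.lift _ (IsLocalization.lift hu) (by
    intro x hx
    rw [Ideal.mem_span_singleton] at hx
    obtain ⟨c, rfl⟩ := hx
    rw [map_mul, IsLocalization.lift_eq hu,
      show Ideal.Quotient.mk (Ideal.span {X ^ 2 - C g}) (X ^ 2 - C g) = 0 from
        Ideal.Quotient.eq_zero_iff_mem.mpr (Ideal.mem_span_singleton_self _), zero_mul])

noncomputable def auxBeta :
    (Polynomial R ⧸ Ideal.span {X ^ 2 - C g}) →+*
      (Localization.AtPrime P ⧸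
        Ideal.span {algebraMap (Polynomial R) (Localization.AtPrime P) (X ^ 2 - C g)}) :=
  Ideal.Quotient.lift _
    ((Ideal.Quotient.mk _).comp (algebraMap (Polynomial R) (Localization.AtPrime P))) (by
    intro p hp
    rw [Ideal.mem_span_singleton] at hp
    obtain ⟨c, rfl⟩ := hp
    rw [RingHom.comp_apply]
    refine Ideal.Quotient.eq_zero_iff_mem.mpr ?_
    rw [map_mul]
    exact Ideal.mul_mem_right _ _ (Ideal.mem_span_singleton_self _))

noncomputable def auxEquiv
    (hu : ∀ y : P.primeCompl, IsUnit (Ideal.Quotient.mk (Ideal.span {X ^ 2 - C g})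
      (y : Polynomial R))) :
    (Polynomial R ⧸ Ideal.span {X ^ 2 - C g}) ≃+*
      (Localization.AtPrime P ⧸
        Ideal.span {algebraMap (Polynomial R) (Localization.AtPrime P) (X ^ 2 - C g)}) :=
  RingEquiv.ofRingHom (auxBeta g P) (auxAlphaBar g P hu)
    (h₂ := by
      apply Ideal.Quotient.ringHom_ext
      refine RingHom.ext fun p => ?_
      show IsLocalization.lift hu (algebraMap (Polynomial R) (Localization.AtPrime P) p) =
        Ideal.Quotient.mk (Ideal.span {X ^ 2 - C g}) p
      exact IsLocalization.lift_eq hu p)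
    (h₁ := by
      apply Ideal.Quotient.ringHom_ext
      apply IsLocalization.ringHom_ext P.primeCompl
      refine RingHom.ext fun p => ?_
      show auxBeta g P (IsLocalization.lift hu
          (algebraMap (Polynomial R) (Localization.AtPrime P) p)) =
        Ideal.Quotient.mk _ (algebraMap (Polynomial R) (Localization.AtPrime P) p)
      rw [IsLocalization.lift_eq]
      rfl)

end Iso


/-- A Noetherian local ring is *regular* if its maximal ideal can be generated by
`dim R` elements. -/
def IsRegularLocal (R : Type*) [CommRing R] [IsLocalRing R] : Prop :=
  IsNoetherianRing R ∧
    ∃ s : Finset R, Ideal.span (s : Set R) = maximalIdeal R ∧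
      (s.card : WithBot (WithTop ℕ)) = ringKrullDim R

/-- Two elements of a commutative ring have *no common factor* (are coprime) if no
irreducible element divides both. -/
def NoCommonIrreducibleFactor {R : Type*} [CommRing R] (f₁ f₂ : R) : Prop :=
  ∀ p : R, Irreducible p → p ∣ f₁ → ¬ p ∣ f₂

/-- The local hypersurface ring `R[t]_{(𝔪,t)} / (t² - g)`, where `P = (𝔪, t)` is the
prime ideal of `R[t]` generated by the maximal ideal of `R` together with `t`. -/
def HypersurfaceRing (R : Type*) [CommRing R] (P : Ideal (Polynomial R)) [P.IsPrime]
    (g : Polynomial R) : Type _ :=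
  Localization.AtPrime P ⧸
    Ideal.span {algebraMap (Polynomial R) (Localization.AtPrime P) g}

noncomputable instance (R : Type*) [CommRing R] (P : Ideal (Polynomial R)) [P.IsPrime]
    (g : Polynomial R) : CommRing (HypersurfaceRing R P g) := by
  unfold HypersurfaceRing; infer_instance

/-- Let `(R, 𝔪)` be a regular local ring and `f₁, f₂ ∈ 𝔪` coprime
elements (no common irreducible factor). Then the local hypersurface ring
`R[t]_{(t)}/(t² - f₁f₂)` — the localization of `R[t]` at the prime ideal generated by
`𝔪` and `t`, modulo `t² - f₁f₂` — is not a unique factorization domain. -/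
theorem hypersurfaceRing_not_ufd
    (R : Type*) [CommRing R] [IsLocalRing R] (hreg : IsRegularLocal R)
    (f₁ f₂ : R) (hf₁ : f₁ ∈ maximalIdeal R) (hf₂ : f₂ ∈ maximalIdeal R)
    (hcop : NoCommonIrreducibleFactor f₁ f₂)
    (P : Ideal (Polynomial R))
    (hP : P = Ideal.span ({Polynomial.X} ∪ Polynomial.C '' (maximalIdeal R : Set R)))
    [P.IsPrime]
    [IsDomain (HypersurfaceRing R P (Polynomial.X ^ 2 - Polynomial.C (f₁ * f₂)))] :
    ¬ UniqueFactorizationMonoid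
        (HypersurfaceRing R P (Polynomial.X ^ 2 - Polynomial.C (f₁ * f₂))) := by
  intro hufm
  have hg : f₁ * f₂ ∈ maximalIdeal R := Ideal.mul_mem_right _ _ hf₁
  haveI hdom : IsDomain (Localization.AtPrime P ⧸
      Ideal.span {algebraMap (Polynomial R) (Localization.AtPrime P) (X ^ 2 - C (f₁ * f₂))}) :=
    ‹IsDomain (HypersurfaceRing R P (X ^ 2 - C (f₁ * f₂)))›
  have hufm' : UniqueFactorizationMonoid (Localization.AtPrime P ⧸
      Ideal.span {algebraMap (Polynomial R) (Localization.AtPrime P) (X ^ 2 - C (f₁ * f₂))}) :=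
    hufm
  have hu : ∀ y : P.primeCompl, IsUnit (Ideal.Quotient.mk
      (Ideal.span {X ^ 2 - C (f₁ * f₂)}) (y : Polynomial R)) := by
    intro y
    refine aux_unit_of_coeff (f₁ * f₂) hg _ ?_
    intro hc
    exact y.2 ((aux_mem_P_iff hP _).mpr hc)
  have e := auxEquiv (f₁ * f₂) P hu
  haveI : IsDomain (Polynomial R ⧸ Ideal.span {X ^ 2 - C (f₁ * f₂)}) :=
    MulEquiv.isDomain _ e.toMulEquiv
  exact aux_not_ufd f₁ f₂ hf₁ hf₂ (e.symm.toMulEquiv.uniqueFactorizationMonoid hufm')
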